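/- Let r ≥ 2 be an integer. Every clique of the graph G_r (i.e., every finite set of vertices of G_r that are pairwise adjacent) has at most 2·log₂(r) + 17 vertices. In particular, the clique number of G_r is O(log r) = O(log log n), where n ∈ Θ(2^r) is the number of vertices of G_r. -/

import Mathlib

/-- Polar radius of the level-`k` vertices of the construction `G_r`. -/
noncomputable def rho (r k : ℕ) : ℝ :=
  Real.arsinh (Real.sinh (r : ℝ) / Real.sin (Real.pi / 2 ^ k))

/-- Polar angle of the `m`-th vertex of level `k`. -/
noncomputable def theta (k m : ℕ) : ℝ :=
  (2 * (m : ℝ) - 1) * Real.pi / 2 ^ k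

/-- Vertices of `G_r`: the root (`none`) together with pairs `(k, m)`. -/
abbrev Vertex : Type := Option (ℕ × ℕ)

/-- The pairs `(k, m)` with `2 ≤ k ≤ r` and `1 ≤ m ≤ 2^k` (together with the
root) are the actual vertices of `G_r`. -/
def ValidVertex (r : ℕ) : Vertex → Prop
  | none => True
  | some (k, m) => 2 ≤ k ∧ k ≤ r ∧ 1 ≤ m ∧ m ≤ 2 ^ k

/-- Two vertices represent points at hyperbolic distance at most `2r`
(expressed via the hyperbolic law of cosines). -/
def HypClose (r : ℕ) : Vertex → Vertex → Prop
  | none, none => False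
  | none, some (k, _) => rho r k ≤ 2 * (r : ℝ)
  | some (k, _), none => rho r k ≤ 2 * (r : ℝ)
  | some (k, m), some (k', m') =>
      Real.cosh (rho r k) * Real.cosh (rho r k') -
          Real.sinh (rho r k) * Real.sinh (rho r k') *
            Real.cos (theta k m - theta k' m') ≤ Real.cosh (2 * (r : ℝ))

/-- The hyperbolic uniform disk graph `G_r` of the construction: two distinct
vertices are adjacent iff the corresponding points have hyperbolic distance at
most `2r`. -/
def Gr (r : ℕ) : SimpleGraph Vertex where
  Adj u v := u ≠ v ∧ HypClose r u v
  symm := by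
    constructor
    rintro (_ | ⟨k, m⟩) (_ | ⟨k', m'⟩) ⟨hne, h⟩
    · exact ⟨hne.symm, h⟩
    · exact ⟨hne.symm, h⟩
    · exact ⟨hne.symm, h⟩
    · refine ⟨hne.symm, ?_⟩
      simp only [HypClose] at h ⊢
      have hc : Real.cos (theta k' m' - theta k m) = Real.cos (theta k m - theta k' m') := by
        rw [show theta k' m' - theta k m = -(theta k m - theta k' m') by ring, Real.cos_neg]
      have h1 : Real.cosh (rho r k') * Real.cosh (rho r k) =
          Real.cosh (rho r k) * Real.cosh (rho r k') := mul_comm _ _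
      have h2 : Real.sinh (rho r k') * Real.sinh (rho r k) =
          Real.sinh (rho r k) * Real.sinh (rho r k') := mul_comm _ _
      rw [hc, h1, h2]
      exact h
  loopless := by
    constructor
    rintro v ⟨hne, _⟩
    exact hne rfl

open Real

namespace GrAux

/-- `s k` is `sin (π / 2^k)`. -/
noncomputable def s (k : ℕ) : ℝ := Real.sin (π / 2 ^ k)

lemma pow_pos2 (k : ℕ) : (0:ℝ) < 2 ^ k := by positivity

lemma s_pos {k : ℕ} (hk : 1 ≤ k) : 0 < s k := by
  apply Real.sin_pos_of_pos_of_lt_pi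
  · positivity
  · rw [div_lt_iff₀ (pow_pos2 k)]
    have h2 : (2:ℝ) ≤ 2 ^ k := by
      calc (2:ℝ) = 2^1 := by norm_num
      _ ≤ 2^k := pow_le_pow_right₀ (by norm_num) hk
    nlinarith [Real.pi_pos]

lemma s_le (k : ℕ) : s k ≤ π / 2 ^ k := Real.sin_le (by positivity)

/-- Key inequality extracted from adjacency: the chordal angular defect is
controlled by the product of the `sin (π/2^k)`. -/
lemma pair_ineq {r k k' : ℕ} (m m' : ℕ) (hr : 1 ≤ r) (hk : 1 ≤ k) (hk' : 1 ≤ k')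
    (h : Real.cosh (rho r k) * Real.cosh (rho r k') -
          Real.sinh (rho r k) * Real.sinh (rho r k') *
            Real.cos (theta k m - theta k' m') ≤ Real.cosh (2 * (r : ℝ))) :
    1 - Real.cos (theta k m - theta k' m') ≤ 2 * s k * s k' := by
  have hsk := s_pos hk
  have hsk' := s_pos hk'
  have hsr : 0 < Real.sinh (r : ℝ) := by
    rw [Real.sinh_pos_iff]; exact_mod_cast Nat.lt_of_lt_of_le Nat.zero_lt_one hr
  have hrho : Real.sinh (rho r k) = Real.sinh (r : ℝ) / s k := by
    rw [rho, Real.sinh_arsinh]; rfl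
  have hrho' : Real.sinh (rho r k') = Real.sinh (r : ℝ) / s k' := by
    rw [rho, Real.sinh_arsinh]; rfl
  have h1 := Real.cosh_sub (rho r k) (rho r k')
  have h2 : Real.cosh (2 * (r:ℝ)) = 1 + 2 * Real.sinh (r:ℝ) ^ 2 := by
    rw [Real.cosh_two_mul, Real.cosh_sq]; ring
  have h3 : (1:ℝ) ≤ Real.cosh (rho r k - rho r k') := Real.one_le_cosh _
  have key : Real.sinh (rho r k) * Real.sinh (rho r k') *
      (1 - Real.cos (theta k m - theta k' m')) ≤ 2 * Real.sinh (r:ℝ) ^ 2 := by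
    nlinarith [h, h1, h3]
  rw [hrho, hrho', div_mul_div_comm] at key
  rw [div_mul_eq_mul_div, div_le_iff₀ (by positivity)] at key
  nlinarith [key, mul_pos hsr hsr, mul_pos hsk hsk', sq_nonneg (Real.sinh (r:ℝ))]

/-- An odd multiple of `π / 2^j` has cosine at most `cos (π / 2^j)`. -/
lemma cos_odd_mul_le (j : ℕ) (n : ℤ) (hn : Odd n) :
    Real.cos ((n : ℝ) * (π / 2 ^ j)) ≤ Real.cos (π / 2 ^ j) := by
  set α : ℝ := π / 2 ^ j with hα_def
  have h2pos : (0:ℝ) < 2 ^ j := by positivity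
  have hα : 0 < α := by rw [hα_def]; positivity
  have hαπ : α ≤ π := by
    rw [hα_def]
    apply div_le_self Real.pi_pos.le
    exact one_le_pow₀ (by norm_num)
  set N : ℤ := 2 ^ (j + 1) with hN_def
  have hNpos : (0:ℤ) < N := by positivity
  have hsplit : N * (n / N) + n % N = n := Int.mul_ediv_add_emod n N
  set q : ℤ := n / N
  set n' : ℤ := n % N with hn'_def
  have h0 : 0 ≤ n' := Int.emod_nonneg n hNpos.ne'
  have h1 : n' < N := Int.emod_lt_of_pos n hNpos
  have hEvenN : Even N := by
    refine ⟨2 ^ j, ?_⟩; rw [hN_def]; ring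
  have hodd' : Odd n' := by
    have : n' = n - N * q := by omega
    rw [this]
    exact hn.sub_even (hEvenN.mul_right q)
  have hne0 : n' ≠ 0 := by
    rintro h
    rw [h] at hodd'
    exact (Int.not_odd_iff_even.mpr Even.zero) hodd'
  have hn1 : 1 ≤ n' := by omega
  have hNα : (N : ℝ) * α = 2 * π := by
    rw [hN_def, hα_def]
    push_cast
    rw [pow_succ]
    field_simp
  have hrw : (n : ℝ) * α = (n' : ℝ) * α + (q : ℝ) * (2 * π) := by
    rw [← hNα]
    have : (n:ℝ) = (N:ℝ) * (q:ℝ) + (n':ℝ) := by exact_mod_cast hsplit.symm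
    rw [this]; ring
  rw [hrw, Real.cos_add_int_mul_two_pi]
  have hx1 : α ≤ (n' : ℝ) * α := by
    nlinarith [show (1:ℝ) ≤ (n':ℝ) by exact_mod_cast hn1]
  have hx2 : (n' : ℝ) * α ≤ 2 * π - α := by
    have : (n':ℝ) ≤ (N:ℝ) - 1 := by
      have : n' ≤ N - 1 := by omega
      exact_mod_cast this
    nlinarith [hNα]
  rcases le_or_gt ((n' : ℝ) * α) π with hle | hgt
  · exact Real.cos_le_cos_of_nonneg_of_le_pi hα.le hle hx1
  · rw [← Real.cos_two_pi_sub]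
    exact Real.cos_le_cos_of_nonneg_of_le_pi hα.le (by linarith) (by linarith)

/-- Angles of vertices on two different levels differ by a nonzero odd multiple
of `π / 2^(max level)`. -/
lemma cross_cos_le (k k' m m' : ℕ) (hkk' : k < k') :
    Real.cos (theta k m - theta k' m') ≤ Real.cos (π / 2 ^ k') := by
  set n : ℤ := (2 * (m : ℤ) - 1) * 2 ^ (k' - k) - (2 * (m' : ℤ) - 1) with hn_def
  have hδ : theta k m - theta k' m' = (n : ℝ) * (π / 2 ^ k') := by
    have h2 : (2:ℝ) ^ k' = 2 ^ (k' - k) * 2 ^ k := by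
      rw [← pow_add]; congr 1; omega
    rw [theta, theta, hn_def]
    push_cast
    field_simp
    rw [h2]
    ring
  rw [hδ]
  apply cos_odd_mul_le
  have heven : Even ((2 * (m : ℤ) - 1) * 2 ^ (k' - k)) := by
    have : Even ((2:ℤ) ^ (k' - k)) := by
      rcases Nat.exists_eq_succ_of_ne_zero (by omega : k' - k ≠ 0) with ⟨i, hi⟩
      rw [hi, pow_succ]
      exact (even_two (α := ℤ)).mul_left _
    exact this.mul_left _
  have hodd : Odd (2 * (m' : ℤ) - 1) := ⟨(m' : ℤ) - 1, by ring⟩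
  rw [hn_def]
  exact heven.sub_odd hodd

lemma one_sub_cos (z : ℝ) : 1 - Real.cos z = 2 * Real.sin (z / 2) ^ 2 := by
  have h : Real.cos (2 * (z / 2)) = Real.cos (z/2) ^ 2 - Real.sin (z/2) ^ 2 :=
    Real.cos_two_mul' (z / 2)
  have h2 : Real.sin (z/2) ^ 2 + Real.cos (z/2) ^ 2 = 1 := Real.sin_sq_add_cos_sq _
  have hz : 2 * (z / 2) = z := by ring
  rw [hz] at h
  linarith

lemma same_level_cos_aux (k d : ℕ) (hk : 2 ≤ k) (hd1 : 2 ≤ d) (hd2 : d ≤ 2 ^ (k - 1)) :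
    Real.cos ((d : ℝ) * (2 * π / 2 ^ k)) < Real.cos (2 * π / 2 ^ k) := by
  set β : ℝ := 2 * π / 2 ^ k with hβ_def
  have hβ : 0 < β := by rw [hβ_def]; positivity
  have hhalf : (2:ℝ) ^ (k - 1) * β = π := by
    rw [hβ_def]
    have : (2:ℝ) ^ k = 2 ^ (k-1) * 2 := by
      rw [← pow_succ]; congr 1; omega
    rw [this]
    field_simp
  apply Real.cos_lt_cos_of_nonneg_of_le_pi hβ.le
  · rw [← hhalf]
    have : ((d:ℝ)) ≤ (2:ℝ) ^ (k-1) := by exact_mod_cast hd2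
    nlinarith
  · nlinarith [show (2:ℝ) ≤ (d:ℝ) by exact_mod_cast hd1]

lemma same_level_cos (k d : ℕ) (hk : 2 ≤ k) (hd1 : 2 ≤ d) (hd2 : d ≤ 2 ^ k - 2) :
    Real.cos ((d : ℝ) * (2 * π / 2 ^ k)) < Real.cos (2 * π / 2 ^ k) := by
  have h4 : 4 ≤ 2 ^ k := by
    calc 4 = 2^2 := by norm_num
    _ ≤ 2^k := Nat.pow_le_pow_right (by norm_num) hk
  rcases le_or_gt d (2 ^ (k-1)) with h | h
  · exact same_level_cos_aux k d hk hd1 h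
  · have hd' : 2 ≤ 2 ^ k - d ∧ 2 ^ k - d ≤ 2 ^ (k - 1) := by
      have : 2 ^ k = 2 * 2 ^ (k-1) := by
        rw [← pow_succ']; congr 1; omega
      omega
    have hrw : (d : ℝ) * (2 * π / 2 ^ k) = 2 * π - ((2 ^ k - d : ℕ) : ℝ) * (2 * π / 2 ^ k) := by
      have hle : d ≤ 2 ^ k := by omega
      have : ((2 ^ k - d : ℕ) : ℝ) = 2 ^ k - d := by
        push_cast [hle]; ring
      rw [this]
      have h2 : (0:ℝ) < 2 ^ k := by positivity
      field_simp
      ring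
    rw [hrw, Real.cos_two_pi_sub]
    exact same_level_cos_aux k (2 ^ k - d) hk hd'.1 hd'.2

/-- Two distinct vertices on the same level that satisfy the key inequality are
angular neighbours (indices differ by `±1` modulo `2^k`). -/
lemma same_level_pair (k m m' : ℕ) (hk : 2 ≤ k) (hm : 1 ≤ m) (hm2 : m ≤ 2 ^ k)
    (hm' : 1 ≤ m') (hm'2 : m' ≤ 2 ^ k) (hne : m ≠ m')
    (h : 1 - Real.cos (theta k m - theta k m') ≤ 2 * s k * s k) :
    m = m' + 1 ∨ m' = m + 1 ∨ m + (2 ^ k - 1) = m' ∨ m' + (2 ^ k - 1) = m := by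
  have h4 : 4 ≤ 2 ^ k := by
    calc 4 = 2^2 := by norm_num
    _ ≤ 2^k := Nat.pow_le_pow_right (by norm_num) hk
  have hcos2 : Real.cos (2 * π / 2 ^ k) = 1 - 2 * s k ^ 2 := by
    have : 2 * π / 2 ^ k = 2 * (π / 2 ^ k) := by ring
    rw [this]
    have h1 := Real.cos_two_mul' (π / 2 ^ k)
    have h2 := Real.sin_sq_add_cos_sq (π / 2 ^ k)
    rw [s]
    linarith
  have main : ∀ a b : ℕ, 1 ≤ b → a ≤ 2 ^ k → b < a →
      1 - Real.cos (theta k a - theta k b) ≤ 2 * s k * s k →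
      a = b + 1 ∨ b + (2 ^ k - 1) = a := by
    intro a b hb ha hba hab
    set d : ℕ := a - b with hd_def
    have hd1 : 1 ≤ d := by omega
    have hd2 : d ≤ 2 ^ k - 1 := by omega
    have hθ : theta k a - theta k b = (d : ℝ) * (2 * π / 2 ^ k) := by
      rw [theta, theta, hd_def]
      have : ((a - b : ℕ) : ℝ) = (a : ℝ) - b := by
        push_cast [le_of_lt hba]; ring
      rw [this]
      field_simp
      ring
    rw [hθ] at hab
    by_contra hcon
    push_neg at hcon
    have hd1' : 2 ≤ d := by omega
    have hd2' : d ≤ 2 ^ k - 2 := by omega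
    have := same_level_cos k d hk hd1' hd2'
    rw [hcos2] at this
    nlinarith [this, hab]
  rcases Nat.lt_or_ge m' m with hlt | hge
  · rcases main m m' hm' hm2 hlt h with h1 | h1
    · left; exact h1
    · right; right; right; exact h1
  · have hlt : m < m' := by omega
    have hsymm : 1 - Real.cos (theta k m' - theta k m) ≤ 2 * s k * s k := by
      have : Real.cos (theta k m' - theta k m) = Real.cos (theta k m - theta k m') := by
        rw [show theta k m' - theta k m = -(theta k m - theta k m') by ring, Real.cos_neg]
      rw [this]; exact h
    rcases main m' m hm hm'2 hlt hsymm with h1 | h1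
    · right; left; exact h1
    · right; right; left; exact h1

set_option maxHeartbeats 1000000 in
/-- The key "convexity" constraint on any three levels appearing in a clique. -/
lemma triple_bound {k1 k2 k3 : ℕ} (m1 m2 m3 : ℕ) (hk1 : 2 ≤ k1)
    (h12 : k1 < k2) (h23 : k2 < k3)
    (h13 : 1 - Real.cos (theta k1 m1 - theta k3 m3) ≤ 2 * s k1 * s k3)
    (h23' : 1 - Real.cos (theta k2 m2 - theta k3 m3) ≤ 2 * s k2 * s k3) :
    k1 + k3 ≤ 2 * k2 + 5 := by
  set x : ℝ := theta k1 m1 - theta k3 m3 with hx_def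
  set y : ℝ := theta k2 m2 - theta k3 m3 with hy_def
  have hC : Real.cos (x - y) ≤ Real.cos (π / 2 ^ k2) := by
    have : x - y = theta k1 m1 - theta k2 m2 := by rw [hx_def, hy_def]; ring
    rw [this]
    exact cross_cos_le k1 k2 m1 m2 h12
  have hD : 1 - Real.cos (x - y) ≤ 2 * (1 - Real.cos x) + 2 * (1 - Real.cos y) := by
    rw [one_sub_cos, one_sub_cos, one_sub_cos]
    have hsub : Real.sin ((x - y) / 2) =
        Real.sin (x/2) * Real.cos (y/2) - Real.cos (x/2) * Real.sin (y/2) := by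
      rw [show (x - y) / 2 = x/2 - y/2 by ring, Real.sin_sub]
    rw [hsub]
    nlinarith [sq_nonneg (Real.sin (x/2) * Real.cos (y/2) + Real.cos (x/2) * Real.sin (y/2)),
      Real.sin_sq_le_one (x/2), Real.sin_sq_le_one (y/2),
      Real.cos_sq_le_one (x/2), Real.cos_sq_le_one (y/2),
      sq_nonneg (Real.sin (x/2)), sq_nonneg (Real.sin (y/2)),
      mul_nonneg (sq_nonneg (Real.sin (x/2))) (sq_nonneg (Real.cos (y/2))),
      mul_nonneg (sq_nonneg (Real.cos (x/2))) (sq_nonneg (Real.sin (y/2)))]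
  have hs21 : s k2 ≤ s k1 := by
    rw [s, s]
    apply Real.sin_le_sin_of_le_of_le_pi_div_two
    · have : (0:ℝ) ≤ π / 2 ^ k2 := by positivity
      nlinarith [Real.pi_pos]
    · calc π / 2 ^ k1 ≤ π / 2 ^ 1 := by
            apply div_le_div_of_nonneg_left Real.pi_pos.le (by positivity)
            apply pow_le_pow_right₀ (by norm_num) (by omega)
      _ = π / 2 := by norm_num
    · apply div_le_div_of_nonneg_left Real.pi_pos.le (by positivity)
      apply pow_le_pow_right₀ (by norm_num) (by omega)
  have hG : (1:ℝ) / 2 ^ k2 ≤ Real.sin (π / 2 ^ (k2 + 1)) := by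
    have h1 : (2 / π) * (π / 2 ^ (k2+1)) ≤ Real.sin (π / 2 ^ (k2+1)) := by
      apply Real.mul_le_sin (by positivity)
      calc π / 2 ^ (k2+1) ≤ π / 2 ^ 1 := by
            apply div_le_div_of_nonneg_left Real.pi_pos.le (by positivity)
            apply pow_le_pow_right₀ (by norm_num) (by omega)
      _ = π / 2 := by norm_num
    have h2 : (2 / π) * (π / 2 ^ (k2+1)) = 1 / 2 ^ k2 := by
      rw [pow_succ]
      field_simp
    linarith [h2 ▸ h1]
  have hF : 1 - Real.cos (π / 2 ^ k2) = 2 * Real.sin (π / 2 ^ (k2+1)) ^ 2 := by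
    rw [one_sub_cos]
    congr 2
    rw [pow_succ]
    ring
  have hS1 : s k1 ≤ π / 2 ^ k1 := s_le k1
  have hS3 : s k3 ≤ π / 2 ^ k3 := s_le k3
  have hs3nn : 0 ≤ s k3 := (s_pos (by omega : 1 ≤ k3)).le
  have hs1nn : 0 ≤ s k1 := (s_pos (by omega : 1 ≤ k1)).le
  have hkey : Real.sin (π / 2 ^ (k2+1)) ^ 2 ≤ 4 * s k1 * s k3 := by
    have hmul : s k2 * s k3 ≤ s k1 * s k3 := mul_le_mul_of_nonneg_right hs21 hs3nn
    nlinarith [hF, hC, hD, h13, h23']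
  have hsq : ((1:ℝ) / 2 ^ k2) ^ 2 ≤ Real.sin (π / 2 ^ (k2+1)) ^ 2 :=
    pow_le_pow_left₀ (by positivity) hG 2
  have h3 : 4 * s k1 * s k3 ≤ 4 * (π / 2 ^ k1) * (π / 2 ^ k3) := by
    nlinarith [hS1, hS3, show (0:ℝ) < π / 2 ^ k1 by positivity,
      show (0:ℝ) < π / 2 ^ k3 by positivity]
  have hcomb : ((1:ℝ) / 2 ^ k2) ^ 2 ≤ 4 * (π / 2 ^ k1) * (π / 2 ^ k3) := by linarith
  have hA : (0:ℝ) < 2 ^ k1 := by positivity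
  have hB : (0:ℝ) < 2 ^ k3 := by positivity
  have hCc : (0:ℝ) < 2 ^ k2 := by positivity
  have hcomb2 : (2:ℝ) ^ k1 * 2 ^ k3 ≤ 4 * π * π * ((2:ℝ) ^ k2) ^ 2 := by
    have e1 : ((1:ℝ) / 2 ^ k2) ^ 2 = 1 / ((2:ℝ) ^ k2) ^ 2 := by rw [div_pow]; norm_num
    have e2 : 4 * (π / 2 ^ k1) * (π / 2 ^ k3) = (4 * π * π) / ((2:ℝ) ^ k1 * 2 ^ k3) := by
      field_simp
    rw [e1, e2, div_le_div_iff₀ (by positivity) (by positivity)] at hcomb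
    nlinarith [hcomb]
  have hpi : π < 3.15 := Real.pi_lt_d2
  have h40 : 4 * π * π < 40 := by nlinarith [Real.pi_pos]
  have hpow : (2:ℝ) ^ (k1 + k3) < (2:ℝ) ^ (2 * k2 + 6) := by
    have e3 : (2:ℝ) ^ (k1 + k3) = 2 ^ k1 * 2 ^ k3 := pow_add 2 k1 k3
    have e4 : (2:ℝ) ^ (2 * k2 + 6) = 64 * ((2:ℝ) ^ k2) ^ 2 := by
      rw [pow_add, ← pow_mul, mul_comm 2 k2]
      norm_num
      ring
    rw [e3, e4]
    have hX : (0:ℝ) < ((2:ℝ) ^ k2) ^ 2 := by positivity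
    nlinarith [hcomb2, hX]
  have := (pow_lt_pow_iff_right₀ (by norm_num : (1:ℝ) < 2)).mp hpow
  omega

/-- Purely combinatorial counting lemma: a set of levels in `[2, r]` such that
any three of them satisfy the convexity constraint has at most `log₂ r + 8`
elements. -/
lemma count_lemma (r : ℕ) (hr : 2 ≤ r) (L : Finset ℕ) (hsub : L ⊆ Finset.Icc 2 r)
    (htriple : ∀ a ∈ L, ∀ b ∈ L, ∀ c ∈ L, a < b → b < c → a + c ≤ 2 * b + 5) :
    (L.card : ℝ) ≤ Real.logb 2 r + 8 := by
  have hlogb : (0:ℝ) ≤ Real.logb 2 r := Real.logb_nonneg (by norm_num)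
    (by exact_mod_cast Nat.one_le_of_lt hr)
  set t := L.card with ht_def
  rcases le_or_gt t 8 with h8 | h8
  · have : (t:ℝ) ≤ 8 := by exact_mod_cast h8
    linarith
  set f := L.orderEmbOfFin ht_def.symm with hf_def
  have hmem : ∀ i : Fin t, f i ∈ L := fun i => L.orderEmbOfFin_mem ht_def.symm i
  have hmono : StrictMono f := f.strictMono
  set g : ℕ → ℕ := fun i => if h : i < t then f ⟨i, h⟩ else 0 with hg_def
  have hgmem : ∀ i, i < t → g i ∈ L := by
    intro i hi; simp only [hg_def, dif_pos hi]; exact hmem _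
  have hgmono : ∀ i j, i < j → j < t → g i < g j := by
    intro i j hij hj
    simp only [hg_def, dif_pos hj, dif_pos (lt_trans hij hj)]
    exact hmono (by exact_mod_cast hij)
  have hgapd : ∀ d i, i + d < t → g i + d ≤ g (i + d) := by
    intro d
    induction d with
    | zero => intro i _; simp
    | succ n ih =>
      intro i hi
      have h1 := ih i (by omega)
      have h2 : g (i + n) < g (i + n + 1) := hgmono (i+n) (i+n+1) (by omega) (by omega)
      have : i + (n+1) = i + n + 1 := by omega
      rw [this]
      omega
  have hgap : ∀ i j, i ≤ j → j < t → g i + (j - i) ≤ g j := by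
    intro i j hij hj
    have := hgapd (j - i) i (by omega)
    have hrw : i + (j - i) = j := by omega
    rw [hrw] at this
    exact this
  have hM : ∀ i, i < t - 1 → g i < g (t-1) := fun i hi => hgmono i (t-1) hi (by omega)
  have hchain : ∀ i, i ≤ t - 2 →
      1 ≤ (g (t-1) : ℤ) - g i - 5 →
      2 ^ i * ((g (t-1) : ℤ) - g i - 5) ≤ (g (t-1) : ℤ) - g 0 - 5 := by
    intro i
    induction i with
    | zero => intro _ _; simp
    | succ n ih =>
      intro hle hpos
      have hn1t : n + 1 < t - 1 := by omega
      have htri := htriple (g n) (hgmem n (by omega)) (g (n+1)) (hgmem (n+1) (by omega))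
        (g (t-1)) (hgmem (t-1) (by omega)) (hgmono n (n+1) (by omega) (by omega))
        (hM (n+1) hn1t)
      have hb : 2 * ((g (t-1) : ℤ) - g (n+1) - 5) ≤ (g (t-1) : ℤ) - g n - 5 := by
        have : (g n : ℤ) + g (t-1) ≤ 2 * g (n+1) + 5 := by exact_mod_cast htri
        omega
      have hpos' : 1 ≤ (g (t-1) : ℤ) - g n - 5 := by omega
      have := ih (by omega) hpos'
      calc (2:ℤ) ^ (n+1) * ((g (t-1) : ℤ) - g (n+1) - 5)
          = 2 ^ n * (2 * ((g (t-1) : ℤ) - g (n+1) - 5)) := by ring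
        _ ≤ 2 ^ n * ((g (t-1) : ℤ) - g n - 5) := by
            apply mul_le_mul_of_nonneg_left hb (by positivity)
        _ ≤ (g (t-1) : ℤ) - g 0 - 5 := this
  have hgapval : g (t-8) + 7 ≤ g (t-1) := by
    have := hgap (t-8) (t-1) (by omega) (by omega)
    omega
  have hb78 : (2:ℤ) ≤ (g (t-1) : ℤ) - g (t-8) - 5 := by
    have : (g (t-8) : ℤ) + 7 ≤ g (t-1) := by exact_mod_cast hgapval
    omega
  have hkey := hchain (t-8) (by omega) (by omega)
  have hg0 : 2 ≤ g 0 := by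
    have := hsub (hgmem 0 (by omega))
    simp only [Finset.mem_Icc] at this
    omega
  have hgM : g (t-1) ≤ r := by
    have := hsub (hgmem (t-1) (by omega))
    simp only [Finset.mem_Icc] at this
    omega
  have hfinal : (2:ℤ) ^ (t - 7) ≤ (r : ℤ) := by
    have e : (2:ℤ) ^ (t-7) = 2 ^ (t-8) * 2 := by
      rw [← pow_succ]; congr 1; omega
    calc (2:ℤ) ^ (t-7) = 2 ^ (t-8) * 2 := e
      _ ≤ 2 ^ (t-8) * ((g (t-1) : ℤ) - g (t-8) - 5) := by
          apply mul_le_mul_of_nonneg_left hb78 (by positivity)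
      _ ≤ (g (t-1) : ℤ) - g 0 - 5 := hkey
      _ ≤ (r : ℤ) := by
          have h1 : (g (t-1) : ℤ) ≤ r := by exact_mod_cast hgM
          have h2 : (2 : ℤ) ≤ g 0 := by exact_mod_cast hg0
          omega
  have hfinalR : (2:ℝ) ^ (t - 7 : ℕ) ≤ (r : ℝ) := by exact_mod_cast hfinal
  have hlog : ((t - 7 : ℕ) : ℝ) ≤ Real.logb 2 r := by
    have h1 : Real.logb 2 ((2:ℝ) ^ (t - 7 : ℕ)) ≤ Real.logb 2 r :=
      Real.logb_le_logb_of_le (by norm_num) (by positivity) hfinalR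
    rwa [Real.logb_pow, Real.logb_self_eq_one (by norm_num : (1:ℝ) < 2), mul_one] at h1
  have hc : ((t - 7 : ℕ) : ℝ) = (t : ℝ) - 7 := by
    have h7 : 7 ≤ t := by omega
    push_cast [h7]
    ring
  rw [hc] at hlog
  linarith

end GrAux


/-- Lemma 18 (Gr_clique_loglogn): every clique of `G_r` has at most
`2·log₂(r) + 17` vertices. -/
theorem Gr_clique_bound (r : ℕ) (hr : 2 ≤ r) (C : Finset Vertex)
    (hvalid : ∀ v ∈ C, ValidVertex r v)
    (hclique : (Gr r).IsClique (↑C : Set Vertex)) :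
    (C.card : ℝ) ≤ 2 * Real.logb 2 r + 17 := by
  classical
  set P : Finset (ℕ × ℕ) := C.filterMap id (by
    intro a a' b hb hb'
    simp only [Option.mem_def, id] at hb hb'
    rw [hb, ← hb']) with hP_def
  have hPmem : ∀ p ∈ P, some p ∈ C := by
    intro p hp
    rw [hP_def, Finset.mem_filterMap] at hp
    obtain ⟨a, ha, hab⟩ := hp
    simp only [Option.mem_def, id] at hab
    rwa [← hab]
  have hPvalid : ∀ p ∈ P, 2 ≤ p.1 ∧ p.1 ≤ r ∧ 1 ≤ p.2 ∧ p.2 ≤ 2 ^ p.1 := by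
    intro p hp
    have := hvalid (some p) (hPmem p hp)
    obtain ⟨k, m⟩ := p
    exact this
  have hadj : ∀ p ∈ P, ∀ q ∈ P, p ≠ q → HypClose r (some p) (some q) := by
    intro p hp q hq hne
    have h := hclique (Finset.mem_coe.mpr (hPmem p hp)) (Finset.mem_coe.mpr (hPmem q hq))
      (by simpa using hne)
    exact h.2
  have hpairkey : ∀ p ∈ P, ∀ q ∈ P, p ≠ q →
      1 - Real.cos (theta p.1 p.2 - theta q.1 q.2) ≤ 2 * GrAux.s p.1 * GrAux.s q.1 := by
    intro p hp q hq hne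
    have h := hadj p hp q hq hne
    obtain ⟨k, m⟩ := p
    obtain ⟨k', m'⟩ := q
    have hvp := hPvalid (k, m) hp
    have hvq := hPvalid (k', m') hq
    exact GrAux.pair_ineq m m' (by omega) (by omega : 1 ≤ k) (by omega : 1 ≤ k') h
  set L : Finset ℕ := P.image Prod.fst with hL_def
  -- each level contributes at most 2 vertices
  have hfiber : ∀ k ∈ L, (P.filter (fun p => p.1 = k)).card ≤ 2 := by
    intro k hk
    by_contra hcon
    push_neg at hcon
    obtain ⟨a, b, c, ha, hb, hc, hab, hac, hbc⟩ := Finset.two_lt_card_iff.mp hcon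
    rw [Finset.mem_filter] at ha hb hc
    have hva := hPvalid a ha.1
    have hvb := hPvalid b hb.1
    have hvc := hPvalid c hc.1
    have e1 := ha.2
    have e2 := hb.2
    have e3 := hc.2
    have hmab : a.2 ≠ b.2 := fun h => hab (Prod.ext (e1.trans e2.symm) h)
    have hmac : a.2 ≠ c.2 := fun h => hac (Prod.ext (e1.trans e3.symm) h)
    have hmbc : b.2 ≠ c.2 := fun h => hbc (Prod.ext (e2.trans e3.symm) h)
    have p1 := hpairkey a ha.1 b hb.1 hab
    have p2 := hpairkey a ha.1 c hc.1 hac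
    have p3 := hpairkey b hb.1 c hc.1 hbc
    rw [e1, e2] at p1
    rw [e1, e3] at p2
    rw [e2, e3] at p3
    have hk2 : 2 ≤ k := e1 ▸ hva.1
    have ba1 : 1 ≤ a.2 := hva.2.2.1
    have ba2 : a.2 ≤ 2 ^ k := e1 ▸ hva.2.2.2
    have bb1 : 1 ≤ b.2 := hvb.2.2.1
    have bb2 : b.2 ≤ 2 ^ k := e2 ▸ hvb.2.2.2
    have bc1 : 1 ≤ c.2 := hvc.2.2.1
    have bc2 : c.2 ≤ 2 ^ k := e3 ▸ hvc.2.2.2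
    have d1 := GrAux.same_level_pair k a.2 b.2 hk2 ba1 ba2 bb1 bb2 hmab p1
    have d2 := GrAux.same_level_pair k a.2 c.2 hk2 ba1 ba2 bc1 bc2 hmac p2
    have d3 := GrAux.same_level_pair k b.2 c.2 hk2 bb1 bb2 bc1 bc2 hmbc p3
    have h4 : 4 ≤ 2 ^ k := by
      calc 4 = 2^2 := by norm_num
      _ ≤ 2^k := Nat.pow_le_pow_right (by norm_num) hk2
    omega
  have hcardP : P.card ≤ 2 * L.card := by
    rw [Finset.card_eq_sum_card_fiberwise
      (fun p hp => Finset.mem_image_of_mem Prod.fst hp : ∀ p ∈ P, p.1 ∈ L)]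
    calc ∑ k ∈ L, (P.filter (fun p => p.1 = k)).card ≤ ∑ _k ∈ L, 2 :=
          Finset.sum_le_sum hfiber
      _ = 2 * L.card := by rw [Finset.sum_const, smul_eq_mul, mul_comm]
  -- triple property of levels
  have hLtriple : ∀ a ∈ L, ∀ b ∈ L, ∀ c ∈ L, a < b → b < c → a + c ≤ 2 * b + 5 := by
    intro a ha b hb c hc hab hbc
    rw [hL_def, Finset.mem_image] at ha hb hc
    obtain ⟨p, hp, hp1⟩ := ha
    obtain ⟨q, hq, hq1⟩ := hb
    obtain ⟨w, hw, hw1⟩ := hc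
    have hpw : p ≠ w := by
      intro h
      have : a = c := by rw [← hp1, h, hw1]
      omega
    have hqw : q ≠ w := by
      intro h
      have : b = c := by rw [← hq1, h, hw1]
      omega
    have k13 := hpairkey p hp w hw hpw
    have k23 := hpairkey q hq w hw hqw
    rw [hp1, hw1] at k13
    rw [hq1, hw1] at k23
    have hva := hPvalid p hp
    have h2a : 2 ≤ a := hp1 ▸ hva.1
    exact GrAux.triple_bound p.2 q.2 w.2 h2a hab hbc k13 k23
  have hLsub : L ⊆ Finset.Icc 2 r := by
    intro k hk
    rw [hL_def, Finset.mem_image] at hk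
    obtain ⟨p, hp, hp1⟩ := hk
    have := hPvalid p hp
    rw [Finset.mem_Icc]
    omega
  have hcount := GrAux.count_lemma r hr L hLsub hLtriple
  have hCsub : C ⊆ insert none (P.image some) := by
    intro v hv
    match v with
    | none => exact Finset.mem_insert_self _ _
    | some p =>
      apply Finset.mem_insert_of_mem
      apply Finset.mem_image_of_mem
      rw [hP_def, Finset.mem_filterMap]
      exact ⟨some p, hv, rfl⟩
  have hcardC : C.card ≤ 1 + P.card := by
    calc C.card ≤ (insert none (P.image some)).card := Finset.card_le_card hCsub
      _ ≤ (P.image some).card + 1 := Finset.card_insert_le _ _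
      _ ≤ P.card + 1 := Nat.add_le_add_right Finset.card_image_le 1
      _ = 1 + P.card := by omega
  have h1 : C.card ≤ 1 + 2 * L.card := by omega
  have h2 : (C.card : ℝ) ≤ 1 + 2 * (L.card : ℝ) := by exact_mod_cast h1
  linarith [hcount]
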